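/- Let f be a polynomial over ℂ of degree 5, and for 1 ≤ ρ ≤ 4 let φ_ρ denote the average of f over the multiset of the (5−ρ) roots of the ρ-th derivative f^(ρ) (counted with multiplicity). Then 1·φ₁ − 2·φ₂ + 2·φ₃ − 1·φ₄ = 0; i.e., the alternating binomial combination ∑_{0<ρ<5} (−1)^ρ·C(5,ρ)·φ_ρ vanishes (after dividing by 5). -/

import Mathlib

open Polynomial

/-- The average of `f` over the roots of the `ρ`-th derivative of `f`,
counted with multiplicity. -/
noncomputable def phi (f : Polynomial ℂ) (ρ : ℕ) : ℂ :=
  ((derivative^[ρ] f).roots.map (fun x => f.eval x)).sum / ((f.natDegree - ρ : ℕ) : ℂ)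

private lemma multiset_card_eq_four {s : Multiset ℂ} (h : Multiset.card s = 4) :
    ∃ a b c d, s = {a, b, c, d} := by
  obtain ⟨a, ha⟩ := Multiset.card_pos_iff_exists_mem.mp (by rw [h]; norm_num)
  have he : Multiset.card (s.erase a) = 3 := by
    simp [Multiset.card_erase_of_mem ha, h]
  obtain ⟨b, c, d, hbcd⟩ := Multiset.card_eq_three.mp he
  exact ⟨a, b, c, d, by rw [← Multiset.cons_erase ha, hbcd]; rfl⟩

set_option maxHeartbeats 1000000 in
/-- In any quintic, `1·φ₁ − 2·φ₂ + 2·φ₃ − 1·φ₄ = 0`. -/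
theorem quintic_alternating_binomial_relation (f : Polynomial ℂ) (hf : f.degree = 5) :
    1 * phi f 1 - 2 * phi f 2 + 2 * phi f 3 - 1 * phi f 4 = 0 := by
  have hnd : f.natDegree = 5 := natDegree_eq_of_degree_eq_some hf
  have ha5 : f.coeff 5 ≠ 0 := by
    have h0 : f ≠ 0 := fun h => by simp [h] at hf
    have := leadingCoeff_ne_zero.mpr h0
    rwa [leadingCoeff, hnd] at this
  have hev : ∀ x : ℂ, f.eval x = f.coeff 0 + f.coeff 1 * x + f.coeff 2 * x ^ 2
      + f.coeff 3 * x ^ 3 + f.coeff 4 * x ^ 4 + f.coeff 5 * x ^ 5 := by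
    intro x
    rw [eval_eq_sum_range' (show f.natDegree < 6 by omega) x]
    simp [Finset.sum_range_succ]
  -- ρ = 1
  have hsp1 := IsAlgClosed.splits (derivative^[1] f)
  have hnd1 : (derivative^[1] f).natDegree = 4 := by
    apply natDegree_eq_of_le_of_coeff_ne_zero
    · have := natDegree_iterate_derivative f 1
      omega
    · rw [coeff_iterate_derivative]
      norm_num
      exact ha5
  have hcard1 : Multiset.card (derivative^[1] f).roots = 4 := by
    rw [(splits_iff_card_roots).mp hsp1, hnd1]
  obtain ⟨w1, w2, w3, w4, hr1⟩ := multiset_card_eq_four hcard1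
  have hlc1 : (derivative^[1] f).leadingCoeff = 5 * f.coeff 5 := by
    rw [leadingCoeff, hnd1, coeff_iterate_derivative]
    norm_num
  have hfac1 := Splits.eq_prod_roots hsp1
  rw [hr1, hlc1] at hfac1
  have hexp1 : ((({w1, w2, w3, w4} : Multiset ℂ)).map (fun a => X - C a)).prod
      = X ^ 4 - C (w1 + w2 + w3 + w4) * X ^ 3 + C (w1 * w2 + w1 * w3 + w1 * w4 + w2 * w3 + w2 * w4 + w3 * w4) * X ^ 2 - C (w1 * w2 * w3 + w1 * w2 * w4 + w1 * w3 * w4 + w2 * w3 * w4) * X ^ 1 + C (w1 * w2 * w3 * w4) := by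
    simp only [Multiset.insert_eq_cons, Multiset.map_cons, Multiset.map_singleton,
      Multiset.prod_cons, Multiset.prod_singleton, C_add, C_mul]
    ring
  rw [hexp1] at hfac1
  have hc1_1 := congrArg (fun p => Polynomial.coeff p 3) hfac1
  simp only [coeff_iterate_derivative, coeff_C_mul, coeff_add, coeff_sub,
    coeff_X_pow, coeff_C, coeff_X, coeff_X_zero, coeff_X_one, mul_one, mul_zero] at hc1_1
  norm_num at hc1_1
  have hc1_2 := congrArg (fun p => Polynomial.coeff p 2) hfac1
  simp only [coeff_iterate_derivative, coeff_C_mul, coeff_add, coeff_sub,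
    coeff_X_pow, coeff_C, coeff_X, coeff_X_zero, coeff_X_one, mul_one, mul_zero] at hc1_2
  norm_num at hc1_2
  have hc1_3 := congrArg (fun p => Polynomial.coeff p 1) hfac1
  simp only [coeff_iterate_derivative, coeff_C_mul, coeff_add, coeff_sub,
    coeff_X_pow, coeff_C, coeff_X, coeff_X_zero, coeff_X_one, mul_one, mul_zero] at hc1_3
  norm_num at hc1_3
  have hc1_4 := congrArg (fun p => Polynomial.coeff p 0) hfac1
  simp only [coeff_iterate_derivative, coeff_C_mul, coeff_add, coeff_sub,
    coeff_X_pow, coeff_C, coeff_X, coeff_X_zero, coeff_X_one, mul_one, mul_zero] at hc1_4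
  norm_num at hc1_4
  have hX1_1 : (5 * f.coeff 5) ^ 1 * (w1 + w2 + w3 + w4) = (-(4 * f.coeff 4)) := by
    linear_combination 1 * hc1_1
  have hX1_2 : (5 * f.coeff 5) ^ 2 * (w1 * w2 + w1 * w3 + w1 * w4 + w2 * w3 + w2 * w4 + w3 * w4) = (15 * f.coeff 3 * f.coeff 5) := by
    linear_combination (-(5 * f.coeff 5)) * hc1_2
  have hX1_3 : (5 * f.coeff 5) ^ 3 * (w1 * w2 * w3 + w1 * w2 * w4 + w1 * w3 * w4 + w2 * w3 * w4) = (-(50 * f.coeff 2 * f.coeff 5 ^ 2)) := by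
    linear_combination (25 * f.coeff 5 ^ 2) * hc1_3
  have hX1_4 : (5 * f.coeff 5) ^ 4 * (w1 * w2 * w3 * w4) = (125 * f.coeff 1 * f.coeff 5 ^ 3) := by
    linear_combination (-(125 * f.coeff 5 ^ 3)) * hc1_4
  have hq1_1 : (5 * f.coeff 5) ^ 1 * (w1 ^ 1 + w2 ^ 1 + w3 ^ 1 + w4 ^ 1) = (-(4 * f.coeff 4)) := by
    have h : (5 * f.coeff 5) ^ 1 * (w1 ^ 1 + w2 ^ 1 + w3 ^ 1 + w4 ^ 1) = ((5 * f.coeff 5) ^ 1 * (w1 + w2 + w3 + w4)) := by ring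
    rw [hX1_1] at h
    exact h
  have hq1_2 : (5 * f.coeff 5) ^ 2 * (w1 ^ 2 + w2 ^ 2 + w3 ^ 2 + w4 ^ 2) = (-(4 * f.coeff 4)) ^ 2 - 2 * (15 * f.coeff 3 * f.coeff 5) := by
    have h : (5 * f.coeff 5) ^ 2 * (w1 ^ 2 + w2 ^ 2 + w3 ^ 2 + w4 ^ 2) = ((5 * f.coeff 5) ^ 1 * (w1 + w2 + w3 + w4)) ^ 2 - 2 * ((5 * f.coeff 5) ^ 2 * (w1 * w2 + w1 * w3 + w1 * w4 + w2 * w3 + w2 * w4 + w3 * w4)) := by ring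
    rw [hX1_1, hX1_2] at h
    exact h
  have hq1_3 : (5 * f.coeff 5) ^ 3 * (w1 ^ 3 + w2 ^ 3 + w3 ^ 3 + w4 ^ 3) = (-(4 * f.coeff 4)) ^ 3 - 3 * (-(4 * f.coeff 4)) * (15 * f.coeff 3 * f.coeff 5) + 3 * (-(50 * f.coeff 2 * f.coeff 5 ^ 2)) := by
    have h : (5 * f.coeff 5) ^ 3 * (w1 ^ 3 + w2 ^ 3 + w3 ^ 3 + w4 ^ 3) = ((5 * f.coeff 5) ^ 1 * (w1 + w2 + w3 + w4)) ^ 3 - 3 * ((5 * f.coeff 5) ^ 1 * (w1 + w2 + w3 + w4)) * ((5 * f.coeff 5) ^ 2 * (w1 * w2 + w1 * w3 + w1 * w4 + w2 * w3 + w2 * w4 + w3 * w4)) + 3 * ((5 * f.coeff 5) ^ 3 * (w1 * w2 * w3 + w1 * w2 * w4 + w1 * w3 * w4 + w2 * w3 * w4)) := by ring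
    rw [hX1_1, hX1_2, hX1_3] at h
    exact h
  have hq1_4 : (5 * f.coeff 5) ^ 4 * (w1 ^ 4 + w2 ^ 4 + w3 ^ 4 + w4 ^ 4) = (-(4 * f.coeff 4)) ^ 4 - 4 * (-(4 * f.coeff 4)) ^ 2 * (15 * f.coeff 3 * f.coeff 5) + 2 * (15 * f.coeff 3 * f.coeff 5) ^ 2 + 4 * (-(4 * f.coeff 4)) * (-(50 * f.coeff 2 * f.coeff 5 ^ 2)) - 4 * (125 * f.coeff 1 * f.coeff 5 ^ 3) := by
    have h : (5 * f.coeff 5) ^ 4 * (w1 ^ 4 + w2 ^ 4 + w3 ^ 4 + w4 ^ 4) = ((5 * f.coeff 5) ^ 1 * (w1 + w2 + w3 + w4)) ^ 4 - 4 * ((5 * f.coeff 5) ^ 1 * (w1 + w2 + w3 + w4)) ^ 2 * ((5 * f.coeff 5) ^ 2 * (w1 * w2 + w1 * w3 + w1 * w4 + w2 * w3 + w2 * w4 + w3 * w4)) + 2 * ((5 * f.coeff 5) ^ 2 * (w1 * w2 + w1 * w3 + w1 * w4 + w2 * w3 + w2 * w4 + w3 * w4)) ^ 2 + 4 * ((5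 * f.coeff 5) ^ 1 * (w1 + w2 + w3 + w4)) * ((5 * f.coeff 5) ^ 3 * (w1 * w2 * w3 + w1 * w2 * w4 + w1 * w3 * w4 + w2 * w3 * w4)) - 4 * ((5 * f.coeff 5) ^ 4 * (w1 * w2 * w3 * w4)) := by ring
    rw [hX1_1, hX1_2, hX1_3, hX1_4] at h
    exact h
  have hq1_5 : (5 * f.coeff 5) ^ 5 * (w1 ^ 5 + w2 ^ 5 + w3 ^ 5 + w4 ^ 5) = (-(4 * f.coeff 4)) ^ 5 - 5 * (-(4 * f.coeff 4)) ^ 3 * (15 * f.coeff 3 * f.coeff 5) + 5 * (-(4 * f.coeff 4)) * (15 * f.coeff 3 * f.coeff 5) ^ 2 + 5 * (-(4 * f.coeff 4)) ^ 2 * (-(50 * f.coeff 2 * f.coeff 5 ^ 2)) - 5 * (15 * f.coeff 3 * f.coeff 5) * (-(50 * f.coeff 2 * f.coeff 5 ^ 2)) - 5 * (-(4 * f.coeff 4)) * (125 * f.coeff 1 * f.coeff 5 ^ 3) := by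
    have h : (5 * f.coeff 5) ^ 5 * (w1 ^ 5 + w2 ^ 5 + w3 ^ 5 + w4 ^ 5) = ((5 * f.coeff 5) ^ 1 * (w1 + w2 + w3 + w4)) ^ 5 - 5 * ((5 * f.coeff 5) ^ 1 * (w1 + w2 + w3 + w4)) ^ 3 * ((5 * f.coeff 5) ^ 2 * (w1 * w2 + w1 * w3 + w1 * w4 + w2 * w3 + w2 * w4 + w3 * w4)) + 5 * ((5 * f.coeff 5) ^ 1 * (w1 + w2 + w3 + w4)) * ((5 * f.coeff 5) ^ 2 * (w1 * w2 + w1 * w3 + w1 * w4 + w2 * w3 + w2 * w4 + w3 * w4)) ^ 2 + 5 * ((5 * f.coeff 5) ^ 1 * (w1 + w2 + w3 + w4)) ^ 2 * ((5 * f.coeff 5) ^ 3 * (w1 * w2 * w3 + w1 * w2 * w4 + w1 * w3 * w4 + w2 * w3 * w4)) - 5 * ((5 * f.coeff 5) ^ 2 * (w1 * w2 + w1 * w3 + w1 * w4 + w2 * w3 + w2 * w4 + w3 * w4)) * ((5 * f.coeff 5) ^ 3 * (w1 * w2 * w3 + w1 * w2 * w4 + w1 * w3 * w4 + w2 * w3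 * w4)) - 5 * ((5 * f.coeff 5) ^ 1 * (w1 + w2 + w3 + w4)) * ((5 * f.coeff 5) ^ 4 * (w1 * w2 * w3 * w4)) := by ring
    rw [hX1_1, hX1_2, hX1_3, hX1_4] at h
    exact h
  have hsumq1 : (5 * f.coeff 5) ^ 5 * (Multiset.map (fun x => f.eval x) (derivative^[1] f).roots).sum
      = 4 * f.coeff 0 * (5 * f.coeff 5) ^ 5 + f.coeff 1 * (5 * f.coeff 5) ^ 4 * ((-(4 * f.coeff 4))) + f.coeff 2 * (5 * f.coeff 5) ^ 3 * ((-(4 * f.coeff 4)) ^ 2 - 2 * (15 * f.coeff 3 * f.coeff 5)) + f.coeff 3 * (5 * f.coeff 5) ^ 2 * ((-(4 * f.coeff 4)) ^ 3 - 3 * (-(4 * f.coeff 4)) * (15 * f.coeff 3 * f.coeff 5) + 3 * (-(50 * f.coeff 2 * f.coeff 5 ^ 2))) + f.coeff 4 * (5 * f.coeff 5) ^ 1 * ((-(4 * f.coeff 4)) ^ 4 - 4 * (-(4 * f.coeff 4)) ^ 2 * (15 * f.coeff 3 * f.coeff 5) + 2 * (15 * f.coeff 3 * f.coeff 5) ^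 2 + 4 * (-(4 * f.coeff 4)) * (-(50 * f.coeff 2 * f.coeff 5 ^ 2)) - 4 * (125 * f.coeff 1 * f.coeff 5 ^ 3)) + f.coeff 5 * ((-(4 * f.coeff 4)) ^ 5 - 5 * (-(4 * f.coeff 4)) ^ 3 * (15 * f.coeff 3 * f.coeff 5) + 5 * (-(4 * f.coeff 4)) * (15 * f.coeff 3 * f.coeff 5) ^ 2 + 5 * (-(4 * f.coeff 4)) ^ 2 * (-(50 * f.coeff 2 * f.coeff 5 ^ 2)) - 5 * (15 * f.coeff 3 * f.coeff 5) * (-(50 * f.coeff 2 * f.coeff 5 ^ 2)) - 5 * (-(4 * f.coeff 4)) * (125 * f.coeff 1 * f.coeff 5 ^ 3)) := by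
    rw [hr1]
    simp only [Multiset.insert_eq_cons, Multiset.map_cons, Multiset.map_singleton,
      Multiset.sum_cons, Multiset.sum_singleton]
    rw [hev w1, hev w2, hev w3, hev w4]
    linear_combination f.coeff 1 * (5 * f.coeff 5) ^ 4 * hq1_1 + f.coeff 2 * (5 * f.coeff 5) ^ 3 * hq1_2 + f.coeff 3 * (5 * f.coeff 5) ^ 2 * hq1_3 + f.coeff 4 * (5 * f.coeff 5) ^ 1 * hq1_4 + f.coeff 5 * hq1_5
  -- ρ = 2
  have hsp2 := IsAlgClosed.splits (derivative^[2] f)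
  have hnd2 : (derivative^[2] f).natDegree = 3 := by
    apply natDegree_eq_of_le_of_coeff_ne_zero
    · have := natDegree_iterate_derivative f 2
      omega
    · rw [coeff_iterate_derivative]
      norm_num
      exact ha5
  have hcard2 : Multiset.card (derivative^[2] f).roots = 3 := by
    rw [(splits_iff_card_roots).mp hsp2, hnd2]
  obtain ⟨v1, v2, v3, hr2⟩ := Multiset.card_eq_three.mp hcard2
  have hlc2 : (derivative^[2] f).leadingCoeff = 20 * f.coeff 5 := by
    rw [leadingCoeff, hnd2, coeff_iterate_derivative]
    norm_num
  have hfac2 := Splits.eq_prod_roots hsp2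
  rw [hr2, hlc2] at hfac2
  have hexp2 : ((({v1, v2, v3} : Multiset ℂ)).map (fun a => X - C a)).prod
      = X ^ 3 - C (v1 + v2 + v3) * X ^ 2 + C (v1 * v2 + v1 * v3 + v2 * v3) * X ^ 1 - C (v1 * v2 * v3) := by
    simp only [Multiset.insert_eq_cons, Multiset.map_cons, Multiset.map_singleton,
      Multiset.prod_cons, Multiset.prod_singleton, C_add, C_mul]
    ring
  rw [hexp2] at hfac2
  have hc2_1 := congrArg (fun p => Polynomial.coeff p 2) hfac2
  simp only [coeff_iterate_derivative, coeff_C_mul, coeff_add, coeff_sub,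
    coeff_X_pow, coeff_C, coeff_X, coeff_X_zero, coeff_X_one, mul_one, mul_zero] at hc2_1
  norm_num at hc2_1
  have hc2_2 := congrArg (fun p => Polynomial.coeff p 1) hfac2
  simp only [coeff_iterate_derivative, coeff_C_mul, coeff_add, coeff_sub,
    coeff_X_pow, coeff_C, coeff_X, coeff_X_zero, coeff_X_one, mul_one, mul_zero] at hc2_2
  norm_num at hc2_2
  have hc2_3 := congrArg (fun p => Polynomial.coeff p 0) hfac2
  simp only [coeff_iterate_derivative, coeff_C_mul, coeff_add, coeff_sub,
    coeff_X_pow, coeff_C, coeff_X, coeff_X_zero, coeff_X_one, mul_one, mul_zero] at hc2_3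
  norm_num at hc2_3
  have hX2_1 : (10 * f.coeff 5) ^ 1 * (v1 + v2 + v3) = (-(6 * f.coeff 4)) := by
    linear_combination ((1:ℂ)/2) * hc2_1
  have hX2_2 : (10 * f.coeff 5) ^ 2 * (v1 * v2 + v1 * v3 + v2 * v3) = (30 * f.coeff 3 * f.coeff 5) := by
    linear_combination (-(5 * f.coeff 5)) * hc2_2
  have hX2_3 : (10 * f.coeff 5) ^ 3 * (v1 * v2 * v3) = (-(100 * f.coeff 2 * f.coeff 5 ^ 2)) := by
    linear_combination (50 * f.coeff 5 ^ 2) * hc2_3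
  have hq2_1 : (10 * f.coeff 5) ^ 1 * (v1 ^ 1 + v2 ^ 1 + v3 ^ 1) = (-(6 * f.coeff 4)) := by
    have h : (10 * f.coeff 5) ^ 1 * (v1 ^ 1 + v2 ^ 1 + v3 ^ 1) = ((10 * f.coeff 5) ^ 1 * (v1 + v2 + v3)) := by ring
    rw [hX2_1] at h
    exact h
  have hq2_2 : (10 * f.coeff 5) ^ 2 * (v1 ^ 2 + v2 ^ 2 + v3 ^ 2) = (-(6 * f.coeff 4)) ^ 2 - 2 * (30 * f.coeff 3 * f.coeff 5) := by
    have h : (10 * f.coeff 5) ^ 2 * (v1 ^ 2 + v2 ^ 2 + v3 ^ 2) = ((10 * f.coeff 5) ^ 1 * (v1 + v2 + v3)) ^ 2 - 2 * ((10 * f.coeff 5) ^ 2 * (v1 * v2 + v1 * v3 + v2 * v3)) := by ring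
    rw [hX2_1, hX2_2] at h
    exact h
  have hq2_3 : (10 * f.coeff 5) ^ 3 * (v1 ^ 3 + v2 ^ 3 + v3 ^ 3) = (-(6 * f.coeff 4)) ^ 3 - 3 * (-(6 * f.coeff 4)) * (30 * f.coeff 3 * f.coeff 5) + 3 * (-(100 * f.coeff 2 * f.coeff 5 ^ 2)) := by
    have h : (10 * f.coeff 5) ^ 3 * (v1 ^ 3 + v2 ^ 3 + v3 ^ 3) = ((10 * f.coeff 5) ^ 1 * (v1 + v2 + v3)) ^ 3 - 3 * ((10 * f.coeff 5) ^ 1 * (v1 + v2 + v3)) * ((10 * f.coeff 5) ^ 2 * (v1 * v2 + v1 * v3 + v2 * v3)) + 3 * ((10 * f.coeff 5) ^ 3 * (v1 * v2 * v3)) := by ring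
    rw [hX2_1, hX2_2, hX2_3] at h
    exact h
  have hq2_4 : (10 * f.coeff 5) ^ 4 * (v1 ^ 4 + v2 ^ 4 + v3 ^ 4) = (-(6 * f.coeff 4)) ^ 4 - 4 * (-(6 * f.coeff 4)) ^ 2 * (30 * f.coeff 3 * f.coeff 5) + 2 * (30 * f.coeff 3 * f.coeff 5) ^ 2 + 4 * (-(6 * f.coeff 4)) * (-(100 * f.coeff 2 * f.coeff 5 ^ 2)) := by
    have h : (10 * f.coeff 5) ^ 4 * (v1 ^ 4 + v2 ^ 4 + v3 ^ 4) = ((10 * f.coeff 5) ^ 1 * (v1 + v2 + v3)) ^ 4 - 4 * ((10 * f.coeff 5) ^ 1 * (v1 + v2 + v3)) ^ 2 * ((10 * f.coeff 5) ^ 2 * (v1 * v2 + v1 * v3 + v2 * v3)) + 2 * ((10 * f.coeff 5) ^ 2 * (v1 * v2 + v1 * v3 + v2 * v3)) ^ 2 + 4 * ((10 * f.coeff 5) ^ 1 * (v1 + v2 + v3)) * ((10 * f.coeff 5) ^ 3 * (v1 * v2 * v3)) := by ring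
    rw [hX2_1, hX2_2, hX2_3] at h
    exact h
  have hq2_5 : (10 * f.coeff 5) ^ 5 * (v1 ^ 5 + v2 ^ 5 + v3 ^ 5) = (-(6 * f.coeff 4)) ^ 5 - 5 * (-(6 * f.coeff 4)) ^ 3 * (30 * f.coeff 3 * f.coeff 5) + 5 * (-(6 * f.coeff 4)) * (30 * f.coeff 3 * f.coeff 5) ^ 2 + 5 * (-(6 * f.coeff 4)) ^ 2 * (-(100 * f.coeff 2 * f.coeff 5 ^ 2)) - 5 * (30 * f.coeff 3 * f.coeff 5) * (-(100 * f.coeff 2 * f.coeff 5 ^ 2)) := by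
    have h : (10 * f.coeff 5) ^ 5 * (v1 ^ 5 + v2 ^ 5 + v3 ^ 5) = ((10 * f.coeff 5) ^ 1 * (v1 + v2 + v3)) ^ 5 - 5 * ((10 * f.coeff 5) ^ 1 * (v1 + v2 + v3)) ^ 3 * ((10 * f.coeff 5) ^ 2 * (v1 * v2 + v1 * v3 + v2 * v3)) + 5 * ((10 * f.coeff 5) ^ 1 * (v1 + v2 + v3)) * ((10 * f.coeff 5) ^ 2 * (v1 * v2 + v1 * v3 + v2 * v3)) ^ 2 + 5 * ((10 * f.coeff 5) ^ 1 * (v1 + v2 + v3)) ^ 2 * ((10 * f.coeff 5) ^ 3 * (v1 * v2 * v3)) - 5 * ((10 * f.coeff 5) ^ 2 * (v1 * v2 + v1 * v3 + v2 * v3)) * ((10 * f.coeff 5) ^ 3 * (v1 * v2 * v3)) := by ring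
    rw [hX2_1, hX2_2, hX2_3] at h
    exact h
  have hsumq2 : (10 * f.coeff 5) ^ 5 * (Multiset.map (fun x => f.eval x) (derivative^[2] f).roots).sum
      = 3 * f.coeff 0 * (10 * f.coeff 5) ^ 5 + f.coeff 1 * (10 * f.coeff 5) ^ 4 * ((-(6 * f.coeff 4))) + f.coeff 2 * (10 * f.coeff 5) ^ 3 * ((-(6 * f.coeff 4)) ^ 2 - 2 * (30 * f.coeff 3 * f.coeff 5)) + f.coeff 3 * (10 * f.coeff 5) ^ 2 * ((-(6 * f.coeff 4)) ^ 3 - 3 * (-(6 * f.coeff 4)) * (30 * f.coeff 3 * f.coeff 5) + 3 * (-(100 * f.coeff 2 * f.coeff 5 ^ 2))) + f.coeff 4 * (10 * f.coeff 5) ^ 1 * ((-(6 * f.coeff 4)) ^ 4 - 4 * (-(6 * f.coeff 4)) ^ 2 * (30 * f.coeff 3 * f.coeff 5) + 2 * (30 * f.coeff 3 * f.coeff 5) ^ 2 + 4 * (-(6 * f.coeff 4)) * (-(100 * f.coeff 2 * f.coeff 5 ^ 2))) + f.coeff 5 * ((-(6 * f.coeff 4)) ^ 5 - 5 * (-(6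 * f.coeff 4)) ^ 3 * (30 * f.coeff 3 * f.coeff 5) + 5 * (-(6 * f.coeff 4)) * (30 * f.coeff 3 * f.coeff 5) ^ 2 + 5 * (-(6 * f.coeff 4)) ^ 2 * (-(100 * f.coeff 2 * f.coeff 5 ^ 2)) - 5 * (30 * f.coeff 3 * f.coeff 5) * (-(100 * f.coeff 2 * f.coeff 5 ^ 2))) := by
    rw [hr2]
    simp only [Multiset.insert_eq_cons, Multiset.map_cons, Multiset.map_singleton,
      Multiset.sum_cons, Multiset.sum_singleton]
    rw [hev v1, hev v2, hev v3]
    linear_combination f.coeff 1 * (10 * f.coeff 5) ^ 4 * hq2_1 + f.coeff 2 * (10 * f.coeff 5) ^ 3 * hq2_2 + f.coeff 3 * (10 * f.coeff 5) ^ 2 * hq2_3 + f.coeff 4 * (10 * f.coeff 5) ^ 1 * hq2_4 + f.coeff 5 * hq2_5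
  -- ρ = 3
  have hsp3 := IsAlgClosed.splits (derivative^[3] f)
  have hnd3 : (derivative^[3] f).natDegree = 2 := by
    apply natDegree_eq_of_le_of_coeff_ne_zero
    · have := natDegree_iterate_derivative f 3
      omega
    · rw [coeff_iterate_derivative]
      norm_num
      exact ha5
  have hcard3 : Multiset.card (derivative^[3] f).roots = 2 := by
    rw [(splits_iff_card_roots).mp hsp3, hnd3]
  obtain ⟨u1, u2, hr3⟩ := Multiset.card_eq_two.mp hcard3
  have hlc3 : (derivative^[3] f).leadingCoeff = 60 * f.coeff 5 := by
    rw [leadingCoeff, hnd3, coeff_iterate_derivative]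
    norm_num
  have hfac3 := Splits.eq_prod_roots hsp3
  rw [hr3, hlc3] at hfac3
  have hexp3 : ((({u1, u2} : Multiset ℂ)).map (fun a => X - C a)).prod
      = X ^ 2 - C (u1 + u2) * X ^ 1 + C (u1 * u2) := by
    simp only [Multiset.insert_eq_cons, Multiset.map_cons, Multiset.map_singleton,
      Multiset.prod_cons, Multiset.prod_singleton, C_add, C_mul]
    ring
  rw [hexp3] at hfac3
  have hc3_1 := congrArg (fun p => Polynomial.coeff p 1) hfac3
  simp only [coeff_iterate_derivative, coeff_C_mul, coeff_add, coeff_sub,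
    coeff_X_pow, coeff_C, coeff_X, coeff_X_zero, coeff_X_one, mul_one, mul_zero] at hc3_1
  norm_num at hc3_1
  have hc3_2 := congrArg (fun p => Polynomial.coeff p 0) hfac3
  simp only [coeff_iterate_derivative, coeff_C_mul, coeff_add, coeff_sub,
    coeff_X_pow, coeff_C, coeff_X, coeff_X_zero, coeff_X_one, mul_one, mul_zero] at hc3_2
  norm_num at hc3_2
  have hX3_1 : (10 * f.coeff 5) ^ 1 * (u1 + u2) = (-(4 * f.coeff 4)) := by
    linear_combination ((1:ℂ)/6) * hc3_1
  have hX3_2 : (10 * f.coeff 5) ^ 2 * (u1 * u2) = (10 * f.coeff 3 * f.coeff 5) := by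
    linear_combination ((-(5:ℂ)/3) * f.coeff 5) * hc3_2
  have hq3_1 : (10 * f.coeff 5) ^ 1 * (u1 ^ 1 + u2 ^ 1) = (-(4 * f.coeff 4)) := by
    have h : (10 * f.coeff 5) ^ 1 * (u1 ^ 1 + u2 ^ 1) = ((10 * f.coeff 5) ^ 1 * (u1 + u2)) := by ring
    rw [hX3_1] at h
    exact h
  have hq3_2 : (10 * f.coeff 5) ^ 2 * (u1 ^ 2 + u2 ^ 2) = (-(4 * f.coeff 4)) ^ 2 - 2 * (10 * f.coeff 3 * f.coeff 5) := by
    have h : (10 * f.coeff 5) ^ 2 * (u1 ^ 2 + u2 ^ 2) = ((10 * f.coeff 5) ^ 1 * (u1 + u2)) ^ 2 - 2 * ((10 * f.coeff 5) ^ 2 * (u1 * u2)) := by ring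
    rw [hX3_1, hX3_2] at h
    exact h
  have hq3_3 : (10 * f.coeff 5) ^ 3 * (u1 ^ 3 + u2 ^ 3) = (-(4 * f.coeff 4)) ^ 3 - 3 * (-(4 * f.coeff 4)) * (10 * f.coeff 3 * f.coeff 5) := by
    have h : (10 * f.coeff 5) ^ 3 * (u1 ^ 3 + u2 ^ 3) = ((10 * f.coeff 5) ^ 1 * (u1 + u2)) ^ 3 - 3 * ((10 * f.coeff 5) ^ 1 * (u1 + u2)) * ((10 * f.coeff 5) ^ 2 * (u1 * u2)) := by ring
    rw [hX3_1, hX3_2] at h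
    exact h
  have hq3_4 : (10 * f.coeff 5) ^ 4 * (u1 ^ 4 + u2 ^ 4) = (-(4 * f.coeff 4)) ^ 4 - 4 * (-(4 * f.coeff 4)) ^ 2 * (10 * f.coeff 3 * f.coeff 5) + 2 * (10 * f.coeff 3 * f.coeff 5) ^ 2 := by
    have h : (10 * f.coeff 5) ^ 4 * (u1 ^ 4 + u2 ^ 4) = ((10 * f.coeff 5) ^ 1 * (u1 + u2)) ^ 4 - 4 * ((10 * f.coeff 5) ^ 1 * (u1 + u2)) ^ 2 * ((10 * f.coeff 5) ^ 2 * (u1 * u2)) + 2 * ((10 * f.coeff 5) ^ 2 * (u1 * u2)) ^ 2 := by ring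
    rw [hX3_1, hX3_2] at h
    exact h
  have hq3_5 : (10 * f.coeff 5) ^ 5 * (u1 ^ 5 + u2 ^ 5) = (-(4 * f.coeff 4)) ^ 5 - 5 * (-(4 * f.coeff 4)) ^ 3 * (10 * f.coeff 3 * f.coeff 5) + 5 * (-(4 * f.coeff 4)) * (10 * f.coeff 3 * f.coeff 5) ^ 2 := by
    have h : (10 * f.coeff 5) ^ 5 * (u1 ^ 5 + u2 ^ 5) = ((10 * f.coeff 5) ^ 1 * (u1 + u2)) ^ 5 - 5 * ((10 * f.coeff 5) ^ 1 * (u1 + u2)) ^ 3 * ((10 * f.coeff 5) ^ 2 * (u1 * u2)) + 5 * ((10 * f.coeff 5) ^ 1 * (u1 + u2)) * ((10 * f.coeff 5) ^ 2 * (u1 * u2)) ^ 2 := by ring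
    rw [hX3_1, hX3_2] at h
    exact h
  have hsumq3 : (10 * f.coeff 5) ^ 5 * (Multiset.map (fun x => f.eval x) (derivative^[3] f).roots).sum
      = 2 * f.coeff 0 * (10 * f.coeff 5) ^ 5 + f.coeff 1 * (10 * f.coeff 5) ^ 4 * ((-(4 * f.coeff 4))) + f.coeff 2 * (10 * f.coeff 5) ^ 3 * ((-(4 * f.coeff 4)) ^ 2 - 2 * (10 * f.coeff 3 * f.coeff 5)) + f.coeff 3 * (10 * f.coeff 5) ^ 2 * ((-(4 * f.coeff 4)) ^ 3 - 3 * (-(4 * f.coeff 4)) * (10 * f.coeff 3 * f.coeff 5)) + f.coeff 4 * (10 * f.coeff 5) ^ 1 * ((-(4 * f.coeff 4)) ^ 4 - 4 * (-(4 * f.coeff 4)) ^ 2 * (10 * f.coeff 3 * f.coeff 5) + 2 * (10 * f.coeff 3 * f.coeff 5) ^ 2) + f.coeff 5 * ((-(4 * f.coeff 4)) ^ 5 - 5 * (-(4 * f.coeff 4)) ^ 3 * (10 * f.coeff 3 * f.coeff 5) + 5 * (-(4 * f.coeff 4)) * (10 * f.coeff 3 * f.coeff 5) ^ 2) := by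
    rw [hr3]
    simp only [Multiset.insert_eq_cons, Multiset.map_cons, Multiset.map_singleton,
      Multiset.sum_cons, Multiset.sum_singleton]
    rw [hev u1, hev u2]
    linear_combination f.coeff 1 * (10 * f.coeff 5) ^ 4 * hq3_1 + f.coeff 2 * (10 * f.coeff 5) ^ 3 * hq3_2 + f.coeff 3 * (10 * f.coeff 5) ^ 2 * hq3_3 + f.coeff 4 * (10 * f.coeff 5) ^ 1 * hq3_4 + f.coeff 5 * hq3_5
  -- ρ = 4
  have hsp4 := IsAlgClosed.splits (derivative^[4] f)
  have hnd4 : (derivative^[4] f).natDegree = 1 := by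
    apply natDegree_eq_of_le_of_coeff_ne_zero
    · have := natDegree_iterate_derivative f 4
      omega
    · rw [coeff_iterate_derivative]
      norm_num
      exact ha5
  have hcard4 : Multiset.card (derivative^[4] f).roots = 1 := by
    rw [(splits_iff_card_roots).mp hsp4, hnd4]
  obtain ⟨t1, hr4⟩ := Multiset.card_eq_one.mp hcard4
  have hlc4 : (derivative^[4] f).leadingCoeff = 120 * f.coeff 5 := by
    rw [leadingCoeff, hnd4, coeff_iterate_derivative]
    norm_num
  have hfac4 := Splits.eq_prod_roots hsp4
  rw [hr4, hlc4] at hfac4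
  have hexp4 : ((({t1} : Multiset ℂ)).map (fun a => X - C a)).prod
      = X ^ 1 - C (t1) := by
    simp only [Multiset.insert_eq_cons, Multiset.map_cons, Multiset.map_singleton,
      Multiset.prod_cons, Multiset.prod_singleton, C_add, C_mul]
    ring
  rw [hexp4] at hfac4
  have hc4_1 := congrArg (fun p => Polynomial.coeff p 0) hfac4
  simp only [coeff_iterate_derivative, coeff_C_mul, coeff_add, coeff_sub,
    coeff_X_pow, coeff_C, coeff_X, coeff_X_zero, coeff_X_one, mul_one, mul_zero] at hc4_1
  norm_num at hc4_1
  have hX4_1 : (5 * f.coeff 5) ^ 1 * (t1) = (-(f.coeff 4)) := by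
    linear_combination ((1:ℂ)/24) * hc4_1
  have hq4_1 : (5 * f.coeff 5) ^ 1 * (t1 ^ 1) = (-(f.coeff 4)) ^ 1 := by
    have h : (5 * f.coeff 5) ^ 1 * (t1 ^ 1) = ((5 * f.coeff 5) ^ 1 * (t1)) ^ 1 := by ring
    rw [hX4_1] at h
    exact h
  have hq4_2 : (5 * f.coeff 5) ^ 2 * (t1 ^ 2) = (-(f.coeff 4)) ^ 2 := by
    have h : (5 * f.coeff 5) ^ 2 * (t1 ^ 2) = ((5 * f.coeff 5) ^ 1 * (t1)) ^ 2 := by ring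
    rw [hX4_1] at h
    exact h
  have hq4_3 : (5 * f.coeff 5) ^ 3 * (t1 ^ 3) = (-(f.coeff 4)) ^ 3 := by
    have h : (5 * f.coeff 5) ^ 3 * (t1 ^ 3) = ((5 * f.coeff 5) ^ 1 * (t1)) ^ 3 := by ring
    rw [hX4_1] at h
    exact h
  have hq4_4 : (5 * f.coeff 5) ^ 4 * (t1 ^ 4) = (-(f.coeff 4)) ^ 4 := by
    have h : (5 * f.coeff 5) ^ 4 * (t1 ^ 4) = ((5 * f.coeff 5) ^ 1 * (t1)) ^ 4 := by ring
    rw [hX4_1] at h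
    exact h
  have hq4_5 : (5 * f.coeff 5) ^ 5 * (t1 ^ 5) = (-(f.coeff 4)) ^ 5 := by
    have h : (5 * f.coeff 5) ^ 5 * (t1 ^ 5) = ((5 * f.coeff 5) ^ 1 * (t1)) ^ 5 := by ring
    rw [hX4_1] at h
    exact h
  have hsumq4 : (5 * f.coeff 5) ^ 5 * (Multiset.map (fun x => f.eval x) (derivative^[4] f).roots).sum
      = 1 * f.coeff 0 * (5 * f.coeff 5) ^ 5 + f.coeff 1 * (5 * f.coeff 5) ^ 4 * ((-(f.coeff 4)) ^ 1) + f.coeff 2 * (5 * f.coeff 5) ^ 3 * ((-(f.coeff 4)) ^ 2) + f.coeff 3 * (5 * f.coeff 5) ^ 2 * ((-(f.coeff 4)) ^ 3) + f.coeff 4 * (5 * f.coeff 5) ^ 1 * ((-(f.coeff 4)) ^ 4) + f.coeff 5 * ((-(f.coeff 4)) ^ 5) := by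
    rw [hr4]
    simp only [Multiset.insert_eq_cons, Multiset.map_cons, Multiset.map_singleton,
      Multiset.sum_cons, Multiset.sum_singleton]
    rw [hev t1]
    linear_combination f.coeff 1 * (5 * f.coeff 5) ^ 4 * hq4_1 + f.coeff 2 * (5 * f.coeff 5) ^ 3 * hq4_2 + f.coeff 3 * (5 * f.coeff 5) ^ 2 * hq4_3 + f.coeff 4 * (5 * f.coeff 5) ^ 1 * hq4_4 + f.coeff 5 * hq4_5
  have d1 : ((5 - 1 : ℕ) : ℂ) = 4 := by norm_num
  have d2 : ((5 - 2 : ℕ) : ℂ) = 3 := by norm_num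
  have d3 : ((5 - 3 : ℕ) : ℂ) = 2 := by norm_num
  have d4 : ((5 - 4 : ℕ) : ℂ) = 1 := by norm_num
  have hM : ((12 : ℂ) * (10 * f.coeff 5) ^ 5) ≠ 0 :=
    mul_ne_zero (by norm_num) (pow_ne_zero _ (mul_ne_zero (by norm_num) ha5))
  have hfin : (12 : ℂ) * (10 * f.coeff 5) ^ 5 *
      (1 * phi f 1 - 2 * phi f 2 + 2 * phi f 3 - 1 * phi f 4) = 0 := by
    unfold phi
    rw [hnd, d1, d2, d3, d4]
    linear_combination (96 : ℂ) * hsumq1 - 8 * hsumq2 + 12 * hsumq3 - 384 * hsumq4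
  exact (mul_eq_zero.mp hfin).resolve_left hM
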